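/- Let α : V × V → U be a symmetric bilinear map, and define β(X,Y) = (α(X,Y)+α(JX,JY), α(X,JY)-α(JX,Y)) and γ(X,Y) = (α(X,Y), α(X,JY)), both valued in W = U × U. Assume both β and γ are flat with respect to the signature-(p,p) bilinear form ⟨⟨,⟩⟩ on W, and that ⟨⟨β(X,Y), γ(Z,T)⟩⟩ = ⟨⟨β(X,T), γ(Z,Y)⟩⟩ for all X,Y,Z,T ∈ V. Let V₁ = π₁(S(β)) ⊆ U, where S(β) = span{β(X,Y) : X,Y ∈ V} and π₁ is projection onto the first factor, and let α_{V₁} = π_{V₁} ∘ α, where π_{V₁} : U → V₁ is the orthogonal projection. Then the kernel N(β) = {Y ∈ V : β(X,Y)=0 for all X} equals the complex nullity space N_c(α_{V₁}) = {Y ∈ V : α_{V₁}(X,Y) = 0 and α_{V₁}(X,JY) = 0 for all X ∈ V}. -/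

import Mathlib

open Module RealInnerProductSpace

/-- If `β` and `γ` are flat and compatible, then `N(β) = N_c(α_{V₁})` where
`V₁ = π₁(S(β))` and `α_{V₁}` is `α` followed by the orthogonal projection onto `V₁`. -/
theorem stmt_15
    {V U : Type*} [AddCommGroup V] [Module ℝ V] [FiniteDimensional ℝ V]
    [NormedAddCommGroup U] [InnerProductSpace ℝ U] [FiniteDimensional ℝ U]
    (p : ℕ) (hU : finrank ℝ U = p)
    (J : V →ₗ[ℝ] V) (hJ : ∀ v : V, J (J v) = -v)
    (α : V →ₗ[ℝ] V →ₗ[ℝ] U) (hα : ∀ X Y : V, α X Y = α Y X)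
    (β : V →ₗ[ℝ] V →ₗ[ℝ] (U × U))
    (hβ : ∀ X Y : V, β X Y = (α X Y + α (J X) (J Y), α X (J Y) - α (J X) Y))
    (γ : V →ₗ[ℝ] V →ₗ[ℝ] (U × U))
    (hγ : ∀ X Y : V, γ X Y = (α X Y, α X (J Y)))
    (hβflat : ∀ X Y Z T : V,
      ⟪(β X Y).1, (β Z T).1⟫ - ⟪(β X Y).2, (β Z T).2⟫ =
        ⟪(β X T).1, (β Z Y).1⟫ - ⟪(β X T).2, (β Z Y).2⟫)
    (hγflat : ∀ X Y Z T : V,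
      ⟪(γ X Y).1, (γ Z T).1⟫ - ⟪(γ X Y).2, (γ Z T).2⟫ =
        ⟪(γ X T).1, (γ Z Y).1⟫ - ⟪(γ X T).2, (γ Z Y).2⟫)
    (hmix : ∀ X Y Z T : V,
      ⟪(β X Y).1, (γ Z T).1⟫ - ⟪(β X Y).2, (γ Z T).2⟫ =
        ⟪(β X T).1, (γ Z Y).1⟫ - ⟪(β X T).2, (γ Z Y).2⟫)
    (V₁ : Submodule ℝ U)
    (hV₁ : V₁ = Submodule.map (LinearMap.fst ℝ U U)
      (Submodule.span ℝ {w : U × U | ∃ X Y : V, β X Y = w})) :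
    ∀ Y : V, (∀ X : V, β X Y = 0) ↔
      (∀ X : V, Submodule.orthogonalProjection V₁ (α X Y) = 0 ∧
        Submodule.orthogonalProjection V₁ (α X (J Y)) = 0) := by
  -- basic component formulas
  have hβ1 : ∀ X Y : V, (β X Y).1 = α X Y + α (J X) (J Y) := fun X Y => by rw [hβ]
  have hβ2 : ∀ X Y : V, (β X Y).2 = α X (J Y) - α (J X) Y := fun X Y => by rw [hβ]
  -- β X (J Y) = ((β X Y).2, -(β X Y).1)
  have hβJ : ∀ X Y : V, β X (J Y) = ((β X Y).2, -(β X Y).1) := by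
    intro X Y
    rw [hβ X (J Y), hβ X Y]
    simp only [hJ, map_neg]
    ext <;> simp <;> abel
  -- symmetry/antisymmetry of components
  have hsymm1 : ∀ Z T : V, (β T Z).1 = (β Z T).1 := by
    intro Z T; rw [hβ1, hβ1, hα T Z, hα (J T) (J Z)]
  have hanti2 : ∀ Z T : V, (β T Z).2 = -(β Z T).2 := by
    intro Z T; rw [hβ2, hβ2, hα T (J Z), hα (J T) Z]; abel
  -- membership of first components in V₁
  have hmem1 : ∀ Z T : V, (β Z T).1 ∈ V₁ := by
    intro Z T
    rw [hV₁]
    exact ⟨β Z T, Submodule.subset_span ⟨Z, T, rfl⟩, rfl⟩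
  intro Y
  constructor
  · -- forward direction
    intro hker X
    have hkerJ : ∀ Z : V, β Z (J Y) = 0 := by
      intro Z; rw [hβJ, hker Z]; simp
    -- key : for Y' with β · Y' = 0, α X Y' ⊥ first components
    have key : ∀ Y' : V, (∀ Z : V, β Z Y' = 0) → ∀ Z T : V,
        ⟪α X Y', (β Z T).1⟫ = 0 := by
      intro Y' hY' Z T
      have h1 := hmix Z T X Y'
      have h2 := hmix T Z X Y'
      rw [hY' Z] at h1
      rw [hY' T] at h2
      simp only [hγ, Prod.fst_zero, Prod.snd_zero, inner_zero_left] at h1 h2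
      rw [hsymm1 Z T, hanti2 Z T, inner_neg_left] at h2
      rw [real_inner_comm]
      linarith
    have hperp : ∀ u : U, (∀ Z T : V, ⟪u, (β Z T).1⟫ = 0) → ∀ w ∈ V₁, ⟪u, w⟫ = 0 := by
      intro u hu w hw
      rw [hV₁] at hw
      obtain ⟨s, hs, rfl⟩ := hw
      have hle : Submodule.span ℝ {w : U × U | ∃ X Y : V, β X Y = w} ≤
          LinearMap.ker ((innerₗ U u).comp (LinearMap.fst ℝ U U)) := by
        rw [Submodule.span_le]
        rintro w ⟨Z, T, rfl⟩
        exact hu Z T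
      exact hle hs
    constructor
    · refine Submodule.orthogonalProjectionOnto_eq_zero_iff.mpr ?_; rw [Submodule.mem_orthogonal]
      intro w hw
      rw [real_inner_comm]
      exact hperp _ (key Y hker) w hw
    · refine Submodule.orthogonalProjectionOnto_eq_zero_iff.mpr ?_; rw [Submodule.mem_orthogonal]
      intro w hw
      rw [real_inner_comm]
      exact hperp _ (key (J Y) hkerJ) w hw
  · -- backward direction
    intro hproj X
    have horth : ∀ X' : V, α X' Y ∈ V₁ᗮ ∧ α X' (J Y) ∈ V₁ᗮ := by
      intro X'
      exact ⟨Submodule.orthogonalProjectionOnto_eq_zero_iff.mp (hproj X').1,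
        Submodule.orthogonalProjectionOnto_eq_zero_iff.mp (hproj X').2⟩
    have h1orth : (β X Y).1 ∈ V₁ᗮ := by
      rw [hβ1]
      exact Submodule.add_mem _ (horth X).1 (horth (J X)).2
    have h2orth : (β X Y).2 ∈ V₁ᗮ := by
      rw [hβ2]
      exact Submodule.sub_mem _ (horth X).2 (horth (J X)).1
    have h2mem : (β X Y).2 ∈ V₁ := by
      have := hmem1 X (J Y)
      rwa [hβJ X Y] at this
    have h1 : (β X Y).1 = 0 := by
      have := (Submodule.mem_orthogonal V₁ (β X Y).1).mp h1orth (β X Y).1 (hmem1 X Y)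
      rwa [real_inner_self_eq_norm_sq, pow_eq_zero_iff, norm_eq_zero] at this
      norm_num
    have h2 : (β X Y).2 = 0 := by
      have := (Submodule.mem_orthogonal V₁ (β X Y).2).mp h2orth (β X Y).2 h2mem
      rwa [real_inner_self_eq_norm_sq, pow_eq_zero_iff, norm_eq_zero] at this
      norm_num
    exact Prod.ext h1 h2
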